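/- arXiv:1907.02150 — 3 statements merged into one kernel-verified Lean document; each statement's English description precedes it below -/
import Mathlib

section
/- For R-modules N' ⊆ N ⊆ M and u ∈ M, if a closure operation cl is functorial and semi-residual, then u ∈ N^{cl}_M if and only if u + N' ∈ (N/N')^{cl}_{M/N'}. -/
/-- A closure operation on (submodules of) `R`-modules: to each pair `N ⊆ M` it assigns
a submodule `N ⊆ N^cl_M ⊆ M`, idempotently and order-preservingly. -/
structure ClosureOperation (R : Type) [CommRing R] where
  cl : ∀ (M : Type) [AddCommGroup M] [Module R M], Submodule R M → Submodule R M
  le_cl : ∀ (M : Type) [AddCommGroup M] [Module R M] (N : Submodule R M), N ≤ cl M N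
  idem : ∀ (M : Type) [AddCommGroup M] [Module R M] (N : Submodule R M),
    cl M (cl M N) = cl M N
  mono : ∀ (M : Type) [AddCommGroup M] [Module R M] ⦃N N' : Submodule R M⦄,
    N ≤ N' → cl M N ≤ cl M N'

/-- `cl` is functorial: `f(N^cl_M) ⊆ f(N)^cl_W` for every `R`-linear `f : M → W`. -/
def ClosureOperation.Functorial {R : Type} [CommRing R] (C : ClosureOperation R) : Prop :=
  ∀ (M W : Type) [AddCommGroup M] [Module R M] [AddCommGroup W] [Module R W]
    (f : M →ₗ[R] W) (N : Submodule R M),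
    (C.cl M N).map f ≤ C.cl W (N.map f)

/-- `cl` is semi-residual: if `N^cl_M = N` then `0^cl_{M/N} = 0`. -/
def ClosureOperation.SemiResidual {R : Type} [CommRing R] (C : ClosureOperation R) : Prop :=
  ∀ (M : Type) [AddCommGroup M] [Module R M] (N : Submodule R M),
    C.cl M N = N → C.cl (M ⧸ N) ⊥ = ⊥

/-- For `N' ⊆ N ⊆ M` and `u ∈ M`, if `cl` is functorial and semi-residual,
then `u ∈ N^cl_M` iff `u + N' ∈ (N/N')^cl_{M/N'}`. -/
theorem stmt_3 (R : Type) [CommRing R] (C : ClosureOperation R)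
    (hF : C.Functorial) (hS : C.SemiResidual)
    (M : Type) [AddCommGroup M] [Module R M]
    (N' N : Submodule R M) (hNN : N' ≤ N) (u : M) :
    u ∈ C.cl M N ↔ N'.mkQ u ∈ C.cl (M ⧸ N') (N.map N'.mkQ) := by
  constructor
  · intro hu
    exact hF M (M ⧸ N') N'.mkQ N ⟨u, hu, rfl⟩
  · intro hu
    set T := C.cl M N with hT
    have hNT : N ≤ T := C.le_cl M N
    have hN'T : N' ≤ T := le_trans hNN hNT
    have hbot : C.cl (M ⧸ T) ⊥ = ⊥ := hS M T (C.idem M N)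
    -- the map π : M ⧸ N' → M ⧸ T
    set π : (M ⧸ N') →ₗ[R] (M ⧸ T) := N'.liftQ T.mkQ (by
      intro x hx
      simpa [LinearMap.mem_ker, Submodule.Quotient.mk_eq_zero] using hN'T hx) with hπ
    have himg : (N.map N'.mkQ).map π ≤ (⊥ : Submodule R (M ⧸ T)) := by
      rintro _ ⟨_, ⟨n, hn, rfl⟩, rfl⟩
      simp only [Submodule.mem_bot, hπ, Submodule.liftQ_apply, Submodule.mkQ_apply]
      exact (Submodule.Quotient.mk_eq_zero T).2 (hNT hn)
    have : π (N'.mkQ u) ∈ C.cl (M ⧸ T) ((N.map N'.mkQ).map π) :=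
      hF (M ⧸ N') (M ⧸ T) π (N.map N'.mkQ) ⟨N'.mkQ u, hu, rfl⟩
    have hz : π (N'.mkQ u) = 0 := by
      have h2 := C.mono (M ⧸ T) himg this
      rw [hbot] at h2
      simpa using h2
    have : T.mkQ u = 0 := by simpa [hπ] using hz
    exact (Submodule.Quotient.mk_eq_zero T).1 this
end

section
/- If cl is a functorial closure operation and N = ⊕_{i∈I} N_i ⊆ M = ⊕_{i∈I} M_i with N_i ⊆ M_i, then N^{cl}_M = ⊕_{i∈I} (N_i)^{cl}_{M_i}. -/
open DirectSum

/-- If `cl` is functorial and `N = ⊕ᵢ Nᵢ ⊆ M = ⊕ᵢ Mᵢ` with `Nᵢ ⊆ Mᵢ`,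
then `N^cl_M = ⊕ᵢ (Nᵢ)^cl_{Mᵢ}`. -/
theorem stmt_4 (R : Type) [CommRing R] (C : ClosureOperation R) (hF : C.Functorial)
    (ι : Type) [DecidableEq ι] (M : ι → Type)
    [∀ i, AddCommGroup (M i)] [∀ i, Module R (M i)]
    (N : ∀ i, Submodule R (M i)) :
    C.cl (⨁ i, M i) (⨆ i, (N i).map (DirectSum.lof R ι M i)) =
      ⨆ i, (C.cl (M i) (N i)).map (DirectSum.lof R ι M i) := by
  apply le_antisymm
  · intro x hx
    have hcomp : ∀ i : ι, (DirectSum.component R ι M i) x ∈ C.cl (M i) (N i) := by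
      intro i
      have h1 : ((⨆ j, (N j).map (DirectSum.lof R ι M j)).map
          (DirectSum.component R ι M i)) ≤ N i := by
        rw [Submodule.map_iSup]
        apply iSup_le
        intro j
        rw [← Submodule.map_comp]
        intro y hy
        obtain ⟨n, hn, rfl⟩ := hy
        simp only [LinearMap.comp_apply]
        by_cases h : j = i
        · subst h
          rw [DirectSum.component.lof_self]; exact hn
        · rw [show (DirectSum.component R ι M i) ((DirectSum.lof R ι M j) n) = 0 from by
            simp [DirectSum.component.of, h]]
          exact (N i).zero_mem
      have h2 := hF _ _ (DirectSum.component R ι M i)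
        (⨆ j, (N j).map (DirectSum.lof R ι M j))
      exact C.mono _ h1 (h2 ⟨x, hx, rfl⟩)
    classical
    have hx' : x = ∑ i ∈ x.support, (DirectSum.lof R ι M i) (x i) := by
      conv_lhs => rw [← DirectSum.sum_support_of x]
      rfl
    rw [hx']
    apply Submodule.sum_mem
    intro i _
    exact Submodule.mem_iSup_of_mem i ⟨x i, hcomp i, rfl⟩
  · apply iSup_le
    intro i
    refine le_trans (hF _ _ (DirectSum.lof R ι M i) (N i)) (C.mono _ ?_)
    exact le_iSup (fun j => (N j).map (DirectSum.lof R ι M j)) i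
end

section
/- Let cl be a closure operation on R-modules that is functorial and semi-residual. Then the big test ideal τ_cl(R) = ⋂_{N ⊆ M} (N :_R N^{cl}_M), where the intersection is over all pairs of R-modules N ⊆ M, equals ⋂_M Ann_R(0^{cl}_M), the intersection of annihilators of 0^{cl}_M over all R-modules M. -/
/-- For a functorial, semi-residual closure operation `cl`, the big test ideal
`τ_cl(R) = ⋂_{N ⊆ M} (N :_R N^cl_M)` equals `⋂_M Ann_R(0^cl_M)`. -/
theorem stmt_15 (R : Type) [CommRing R] (C : ClosureOperation R)
    (hF : C.Functorial) (hS : C.SemiResidual) (r : R) :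
    (∀ (M : Type) [AddCommGroup M] [Module R M] (N : Submodule R M),
        r ∈ N.colon (C.cl M N)) ↔
      (∀ (M : Type) [AddCommGroup M] [Module R M],
        r ∈ (C.cl M (⊥ : Submodule R M)).annihilator) := by
  constructor
  · intro h M _ _
    rw [Submodule.mem_annihilator]
    intro x hx
    have := h M ⊥
    rw [Submodule.mem_colon] at this
    simpa using this x hx
  · intro h M _ _ N
    rw [Submodule.mem_colon]
    intro x hx
    have hmap : N.map N.mkQ = ⊥ := by
      rw [eq_bot_iff]
      rintro y ⟨z, hz, rfl⟩
      simpa [Submodule.Quotient.mk_eq_zero] using hz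
    have h1 : (C.cl M N).map N.mkQ ≤ C.cl (M ⧸ N) ⊥ := by
      have := hF M (M ⧸ N) N.mkQ N
      rwa [hmap] at this
    have h2 := h (M ⧸ N)
    rw [Submodule.mem_annihilator] at h2
    have h3 : N.mkQ x ∈ C.cl (M ⧸ N) ⊥ := h1 ⟨x, hx, rfl⟩
    have h4 : r • N.mkQ x = 0 := h2 _ h3
    rw [← map_smul] at h4
    rwa [← Submodule.Quotient.mk_eq_zero N]
end
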